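/- For every positive integer $b$ and every integer $k \ge 2$, there exists a set $\{n_1, \dots, n_k\}$ of positive integers with $n_1 < n_2 < \cdots < n_k$ such that for all $1 \le i < j \le k$, the number $n_j - n_i$ divides $n_j$ and moreover $b$ divides $n_j/(n_j - n_i)$. -/

import Mathlib

/-- Classic: for each size there is a strictly increasing positive sequence
whose pairwise gaps divide the larger endpoint. -/
lemma exists_eset (m : ℕ) : ∃ e : ℕ → ℕ, (∀ i, 0 < e i) ∧
    (∀ i j, i < j → j ≤ m → e i < e j ∧ (e j - e i) ∣ e j) := by
  induction m with
  | zero => exact ⟨fun _ => 1, fun _ => one_pos, fun i j hij hj => by omega⟩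
  | succ m ih =>
    obtain ⟨e, hpos, hE⟩ := ih
    set L := ∏ i ∈ Finset.range (m+1), e i with hL
    have hLpos : 0 < L := Finset.prod_pos (fun i _ => hpos i)
    have hLdvd : ∀ i ≤ m, e i ∣ L :=
      fun i hi => Finset.dvd_prod_of_mem _ (Finset.mem_range.mpr (by omega))
    refine ⟨fun i => if i = 0 then L else L + e (i - 1), fun i => ?_, fun i j hij hj => ?_⟩
    · dsimp only; split
      · exact hLpos
      · have := hpos (i - 1); omega
    · dsimp only
      have hj0 : j ≠ 0 := by omega
      rcases Nat.eq_zero_or_pos i with hi0 | hi0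
      · have h1 : (if i = 0 then L else L + e (i-1)) = L := by simp [hi0]
        have h2 : (if j = 0 then L else L + e (j-1)) = L + e (j-1) := by simp [hj0]
        rw [h1, h2]
        have hp := hpos (j-1)
        refine ⟨by omega, ?_⟩
        have hsub : L + e (j-1) - L = e (j-1) := by omega
        rw [hsub]
        exact dvd_add (hLdvd (j-1) (by omega)) dvd_rfl
      · have hi0' : i ≠ 0 := by omega
        have h1 : (if i = 0 then L else L + e (i-1)) = L + e (i-1) := by simp [hi0']
        have h2 : (if j = 0 then L else L + e (j-1)) = L + e (j-1) := by simp [hj0]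
        rw [h1, h2]
        obtain ⟨hlt, hdvd⟩ := hE (i-1) (j-1) (by omega) (by omega)
        refine ⟨by omega, ?_⟩
        have hsub : L + e (j-1) - (L + e (i-1)) = e (j-1) - e (i-1) := by omega
        rw [hsub]
        exact dvd_add (hdvd.trans (hLdvd (j-1) (by omega))) hdvd

theorem stmt0 (b k : ℕ) (hb : 0 < b) (hk : 2 ≤ k) :
    ∃ n : Fin k → ℕ, StrictMono n ∧ (∀ i, 0 < n i) ∧
      ∀ i j : Fin k, i < j →
        (n j - n i) ∣ n j ∧ b ∣ n j / (n j - n i) := by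
  obtain ⟨m, rfl⟩ : ∃ m, k = m + 1 := ⟨k - 1, by omega⟩
  obtain ⟨e, hepos, hE⟩ := exists_eset m
  set s := b + 1 with hs
  set F := 1 + ∑ i ∈ Finset.range (m+1), e i with hF
  have heF : ∀ j, j ≤ m → e j < F := by
    intro j hj
    have h := Finset.single_le_sum (f := e) (fun i _ => Nat.zero_le _)
      (Finset.mem_range.mpr (by omega : j < m + 1))
    omega
  have hpow : ∀ D, 0 < D → b ^ D < s ^ D := by
    intro D hD
    exact Nat.pow_lt_pow_left (by omega) (by omega)
  -- coprimality
  have hcop : ∀ D, 0 < D → Nat.Coprime b (s ^ D - b ^ D) := by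
    intro D hD
    have hb1 : Nat.Coprime b s := by
      have h := (Nat.coprime_add_mul_left_right b 1 1).mpr (Nat.coprime_one_right b)
      rw [mul_one] at h
      rwa [hs, add_comm]
    have h1 : Nat.Coprime b (s ^ D) := hb1.pow_right _
    have hbD : b * b ^ (D - 1) = b ^ D := by
      rw [← pow_succ']
      congr 1
      omega
    have h2 : s ^ D = (s ^ D - b ^ D) + b * b ^ (D - 1) := by
      have := hpow D hD
      omega
    rw [h2] at h1
    exact (Nat.coprime_add_mul_left_right b _ _).mp h1
  set P := ∏ p ∈ Finset.range (m+1) ×ˢ Finset.range (m+1),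
      (if p.1 < p.2 then s ^ (e p.2 - e p.1) - b ^ (e p.2 - e p.1) else 1) with hP
  have hfactor : ∀ p : ℕ × ℕ, p ∈ Finset.range (m+1) ×ˢ Finset.range (m+1) →
      0 < (if p.1 < p.2 then s ^ (e p.2 - e p.1) - b ^ (e p.2 - e p.1) else 1) ∧
      Nat.Coprime b (if p.1 < p.2 then s ^ (e p.2 - e p.1) - b ^ (e p.2 - e p.1) else 1) := by
    intro p hp
    rw [Finset.mem_product, Finset.mem_range, Finset.mem_range] at hp
    split
    · next hlt =>
      have hD : 0 < e p.2 - e p.1 := by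
        have := (hE p.1 p.2 hlt (by omega)).1
        omega
      exact ⟨by have := hpow _ hD; omega, hcop _ hD⟩
    · exact ⟨one_pos, Nat.coprime_one_right b⟩
  have hPpos : 0 < P := Finset.prod_pos (fun p hp => (hfactor p hp).1)
  have hcopP : Nat.Coprime (b ^ F) P :=
    Nat.Coprime.pow_left _ (Nat.Coprime.prod_right (fun p hp => (hfactor p hp).2))
  -- the inverse a
  obtain ⟨a, hapos, haP⟩ : ∃ a, 0 < a ∧ P ∣ a * b ^ F - 1 := by
    rcases eq_or_lt_of_le (show 1 ≤ P from hPpos) with hP1 | hP1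
    · exact ⟨1, one_pos, by rw [← hP1]; exact one_dvd _⟩
    · obtain ⟨a, -, ha⟩ := Nat.exists_mul_mod_eq_one_of_coprime hcopP hP1
      have ha0 : a ≠ 0 := by
        intro h; rw [h] at ha; simp at ha
      have hdm := Nat.div_add_mod (b ^ F * a) P
      refine ⟨a, by omega, ⟨(b ^ F * a) / P, ?_⟩⟩
      have : b ^ F * a = a * b ^ F := by ring
      omega
  have hab : 1 ≤ a * b ^ F := by
    have := Nat.mul_pos hapos (pow_pos hb F); omega
  set x : ℕ → ℕ := fun i => a * (s ^ e i * b ^ (F - e i)) with hx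
  have hxpos : ∀ i, 0 < x i := by
    intro i
    have : (0:ℕ) < s ^ e i * b ^ (F - e i) := by positivity
    simp only [hx]
    positivity
  have hx2 : ∀ i, 2 ≤ x i := by
    intro i
    have h1 : 2 ≤ s ^ e i := by
      calc (2:ℕ) ≤ s := by omega
      _ = s ^ 1 := (pow_one s).symm
      _ ≤ s ^ e i := Nat.pow_le_pow_right (by omega) (hepos i)
    calc (2:ℕ) ≤ s ^ e i := h1
    _ ≤ s ^ e i * b ^ (F - e i) := Nat.le_mul_of_pos_right _ (by positivity)
    _ ≤ a * (s ^ e i * b ^ (F - e i)) := Nat.le_mul_of_pos_left _ hapos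
  set C := ∏ i ∈ Finset.range (m+1), x i with hC
  have hCpos : 0 < C := Finset.prod_pos (fun i _ => hxpos i)
  have hxC : ∀ i, i ≤ m → x i ∣ C :=
    fun i hi => Finset.dvd_prod_of_mem _ (Finset.mem_range.mpr (by omega))
  -- the key pair fact
  have hpair : ∀ i j, i < j → j ≤ m → x i < x j ∧ b * (x j - x i) ∣ x i * (x j - 1) := by
    intro i j hij hj
    obtain ⟨hlt_e, hdvd_e⟩ := hE i j hij hj
    set D := e j - e i with hD
    have hDpos : 0 < D := by omega
    have hejF : e j < F := heF j hj
    set W := a * (s ^ e i * b ^ (F - e j)) with hW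
    have hWpos : 0 < W := by
      have : (0:ℕ) < s ^ e i * b ^ (F - e j) := by positivity
      positivity
    have hxi : x i = W * b ^ D := by
      simp only [hx, hW]
      rw [show F - e i = (F - e j) + D by omega, pow_add]
      ring
    have hxj : x j = W * s ^ D := by
      simp only [hx, hW]
      rw [show e j = e i + D by omega, pow_add]
      ring
    have hlt : x i < x j := by
      rw [hxi, hxj]
      exact (mul_lt_mul_iff_right₀ hWpos).mpr (hpow D hDpos)
    refine ⟨hlt, ?_⟩
    obtain ⟨t, ht⟩ := hdvd_e
    have hMdvd1 : s ^ D - b ^ D ∣ s ^ e j - b ^ e j := by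
      rw [ht, pow_mul, pow_mul]
      exact Nat.sub_dvd_pow_sub_pow _ _ t
    have hMP : s ^ D - b ^ D ∣ P := by
      have hmem : ((i, j) : ℕ × ℕ) ∈ Finset.range (m+1) ×ˢ Finset.range (m+1) := by
        rw [Finset.mem_product, Finset.mem_range, Finset.mem_range]
        omega
      have h := Finset.dvd_prod_of_mem
        (fun p : ℕ × ℕ => if p.1 < p.2 then s ^ (e p.2 - e p.1) - b ^ (e p.2 - e p.1) else 1) hmem
      simpa [hij] using h
    have hMa : s ^ D - b ^ D ∣ a * b ^ F - 1 := hMP.trans haP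
    have hMxj : s ^ D - b ^ D ∣ x j - 1 := by
      set A := a * b ^ (F - e j) with hA
      have h1 : A * b ^ e j = a * b ^ F := by
        rw [hA, mul_assoc, ← pow_add]
        congr 2
        omega
      have h2 : A * s ^ e j = x j := by rw [hA, hx]; ring
      have h3 : A * b ^ e j ≤ A * s ^ e j :=
        Nat.mul_le_mul_left _ (Nat.pow_le_pow_left (by omega) _)
      have h5 : A * (s ^ e j - b ^ e j) = A * s ^ e j - A * b ^ e j := by
        rw [Nat.mul_sub]
      have hid : x j - 1 = A * (s ^ e j - b ^ e j) + (a * b ^ F - 1) := by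
        rw [h5]; omega
      rw [hid]
      exact dvd_add (Dvd.dvd.mul_left hMdvd1 A) hMa
    have hsub : x j - x i = W * (s ^ D - b ^ D) := by
      rw [hxi, hxj, Nat.mul_sub]
    have hgoal1 : b * (x j - x i) = W * (b * (s ^ D - b ^ D)) := by rw [hsub]; ring
    have hgoal2 : x i * (x j - 1) = W * (b ^ D * (x j - 1)) := by rw [hxi]; ring
    rw [hgoal1, hgoal2]
    exact mul_dvd_mul_left W (mul_dvd_mul (dvd_pow_self b hDpos.ne') hMxj)
  -- quotient facts
  have hqlt : ∀ i, i ≤ m → C / x i < C := fun i hi => Nat.div_lt_self hCpos (hx2 i)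
  have hqpos : ∀ i, i ≤ m → 0 < C / x i :=
    fun i hi => Nat.div_pos (Nat.le_of_dvd hCpos (hxC i hi)) (hxpos i)
  have hqmono : ∀ i j, i < j → j ≤ m → C / x j < C / x i := by
    intro i j hij hj
    have h2 : (C / x j) * x j = C := Nat.div_mul_cancel (hxC j hj)
    have h3 : (C / x i) * x i = C := Nat.div_mul_cancel (hxC i (by omega))
    have h1 : (C / x j) * x i < (C / x j) * x j :=
      Nat.mul_lt_mul_of_le_of_lt (le_refl _) (hpair i j hij hj).1 (hqpos j hj)
    have h4 : (C / x j) * x i < (C / x i) * x i := by omega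
    exact lt_of_mul_lt_mul_right h4 (Nat.zero_le _)
  refine ⟨fun i => C - C / x ↑i, ?_, ?_, ?_⟩
  · intro i j hij
    have hij' : (↑i : ℕ) < ↑j := hij
    have h1 := hqmono ↑i ↑j hij' (by omega)
    have h2 := hqlt ↑i (by omega)
    have h3 := hqlt ↑j (by omega)
    simp only
    omega
  · intro i
    have h2 := hqlt ↑i (by omega)
    simp only
    omega
  · intro i j hij
    have hij' : (↑i : ℕ) < ↑j := hij
    have hjm : (↑j : ℕ) ≤ m := by omega
    obtain ⟨hltx, hdvdkey⟩ := hpair ↑i ↑j hij' hjm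
    obtain ⟨Q, hQ⟩ := hdvdkey
    set u := C / x ↑i with hu
    set v := C / x ↑j with hv
    have hvu : v < u := hqmono ↑i ↑j hij' hjm
    have huC : u < C := hqlt ↑i (by omega)
    have hvC : v < C := hqlt ↑j hjm
    have e1 : u * x ↑i = C := Nat.div_mul_cancel (hxC ↑i (by omega))
    have e2 : v * x ↑j = C := Nat.div_mul_cancel (hxC ↑j hjm)
    -- main identity
    have G : C - v = (u - v) * (b * Q) := by
      have hxipos := hxpos (↑i : ℕ)
      have hxjpos := hxpos (↑j : ℕ)
      have G' : (C - v) * (x ↑i * x ↑j) = ((u - v) * (b * Q)) * (x ↑i * x ↑j) := by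
        have e1' : (u:ℤ) * (x ↑i : ℕ) = (C:ℤ) := by exact_mod_cast e1
        have e2' : (v:ℤ) * (x ↑j : ℕ) = (C:ℤ) := by exact_mod_cast e2
        have hQ' : ((x ↑i : ℕ):ℤ) * (((x ↑j : ℕ):ℤ) - 1) =
            ((b:ℤ) * (((x ↑j : ℕ):ℤ) - ((x ↑i : ℕ):ℤ))) * (Q:ℤ) := by
          have h1 : (1:ℕ) ≤ x ↑j := by omega
          have h2 : x ↑i ≤ x ↑j := hltx.le
          zify [h1, h2] at hQ
          linarith [hQ]
        zify [hvu.le, hvC.le]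
        linear_combination (C:ℤ) * hQ' - ((b:ℤ) * Q * (x ↑j : ℕ)) * e1'
          + ((b:ℤ) * Q * (x ↑i : ℕ) - (x ↑i : ℕ)) * e2'
      exact Nat.eq_of_mul_eq_mul_right (by positivity) G'
    have hsub_n : (C - v) - (C - u) = u - v := by omega
    simp only
    rw [hsub_n, G]
    constructor
    · exact Dvd.intro _ rfl
    · rw [Nat.mul_div_cancel_left _ (by omega : 0 < u - v)]
      exact dvd_mul_right b Q
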